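/- Let P(0)=0, P(1)=1 and Q(0)=p, Q(1)=1-p with p ∈ [0,1). Then the Bayes-optimal re-identification success probability in the shuffle game with one P-sample among n-1 Q-samples equals (1 - p^n)/((1-p)·n). -/

import Mathlib

open scoped Classical BigOperators

/-- Success probability of adversary `A` in the shuffle re-identification game:
each user `i` samples `y i` from distribution `Pvec i`, a uniformly random
permutation `σ` is applied, the adversary sees the shuffled vector and wins if
it outputs `σ⁻¹ 0` (the shuffled position of user 0, the target). -/
noncomputable def shuffleSuccess {Y : Type*} [Fintype Y] (n : ℕ) [NeZero n]
    (Pvec : Fin n → Y → ℝ) (A : (Fin n → Y) → Fin n) : ℝ :=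
  (Nat.factorial n : ℝ)⁻¹ *
    ∑ σ : Equiv.Perm (Fin n), ∑ y : Fin n → Y,
      (∏ i, Pvec i (y i)) * (if A (fun i => y (σ i)) = σ.symm 0 then 1 else 0)

/-- Bayes-optimal success probability `β_n(P,Q)`: user 0 samples from `P`,
the other `n - 1` users sample i.i.d. from `Q`, and we take the supremum over
all adversaries. -/
noncomputable def betaN {Y : Type*} [Fintype Y] (P Q : Y → ℝ) (n : ℕ) [NeZero n] : ℝ :=
  ⨆ A : (Fin n → Y) → Fin n,
    shuffleSuccess n (fun i => if i = 0 then P else Q) A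

/-- All fibers of evaluation-at-`a` on permutations have the same cardinality. -/
lemma perm_fiber_card_eq {n : ℕ} [NeZero n] (a b b' : Fin n) :
    (Finset.univ.filter fun σ : Equiv.Perm (Fin n) => σ a = b).card =
      (Finset.univ.filter fun σ : Equiv.Perm (Fin n) => σ a = b').card := by
  apply Finset.card_bij' (fun σ _ => Equiv.swap b b' * σ) (fun σ _ => Equiv.swap b b' * σ)
  · intro σ hσ
    simp only [Finset.mem_filter, Finset.mem_univ, true_and] at hσ ⊢
    simp [Equiv.Perm.mul_apply, hσ]
  · intro σ hσ
    simp only [Finset.mem_filter, Finset.mem_univ, true_and] at hσ ⊢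
    simp [Equiv.Perm.mul_apply, hσ]
  · intro σ _
    simp [← mul_assoc]
  · intro σ _
    simp [← mul_assoc]

/-- The number of permutations of `Fin n` sending `a` to `b` is `(n-1)!`. -/
lemma perm_fiber_card {n : ℕ} [NeZero n] (a b : Fin n) :
    (Finset.univ.filter fun σ : Equiv.Perm (Fin n) => σ a = b).card =
      (n - 1).factorial := by
  have hcard :
      (Finset.univ : Finset (Equiv.Perm (Fin n))).card =
        ∑ c : Fin n, (Finset.univ.filter fun σ : Equiv.Perm (Fin n) => σ a = c).card :=
    Finset.card_eq_sum_card_fiberwise (fun σ _ => Finset.mem_univ (σ a))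
  have hconst : ∀ c : Fin n,
      (Finset.univ.filter fun σ : Equiv.Perm (Fin n) => σ a = c).card =
        (Finset.univ.filter fun σ : Equiv.Perm (Fin n) => σ a = b).card :=
    fun c => perm_fiber_card_eq a c b
  have hn : 0 < n := Nat.pos_of_ne_zero (NeZero.ne n)
  have h1 : n.factorial =
      n * (Finset.univ.filter fun σ : Equiv.Perm (Fin n) => σ a = b).card := by
    have := hcard
    rw [Finset.sum_congr rfl (fun c _ => hconst c), Finset.sum_const] at this
    simpa [Finset.card_univ, Fintype.card_perm, smul_eq_mul] using this
  have h2 : n * (n - 1).factorial = n.factorial := Nat.mul_factorial_pred hn.ne'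
  exact (Nat.eq_of_mul_eq_mul_left hn (by omega)).symm

/-- Evaluation of the shuffle success probability. -/
lemma shuffleSuccess_eval {Y : Type*} [Fintype Y] (n : ℕ) [NeZero n] (P Q : Y → ℝ)
    (A : (Fin n → Y) → Fin n) :
    shuffleSuccess n (fun i => if i = 0 then P else Q) A
      = (n : ℝ)⁻¹ * ∑ z : Fin n → Y, ∏ j, (if j = A z then P (z j) else Q (z j)) := by
  have h1 : ∀ σ : Equiv.Perm (Fin n),
      (∑ y : Fin n → Y, (∏ i, (if i = 0 then P else Q) (y i)) *
          (if A (fun i => y (σ i)) = σ.symm 0 then 1 else 0))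
        = ∑ z : Fin n → Y, (∏ j, (if σ j = 0 then P else Q) (z j)) *
            (if A z = σ.symm 0 then 1 else 0) := by
    intro σ
    refine Fintype.sum_equiv (Equiv.arrowCongr σ.symm (Equiv.refl Y)) _ _ (fun y => ?_)
    simp only [Equiv.arrowCongr_apply, Equiv.refl_apply, Equiv.symm_symm, Function.comp,
      Equiv.coe_refl, id_eq]
    congr 1
    exact (Equiv.prod_comp σ fun i => (if i = 0 then P else Q) (y i)).symm
  unfold shuffleSuccess
  rw [Finset.sum_congr rfl (fun σ _ => h1 σ), Finset.sum_comm]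
  have h2 : ∀ z : Fin n → Y,
      (∑ σ : Equiv.Perm (Fin n), (∏ j, (if σ j = 0 then P else Q) (z j)) *
          (if A z = σ.symm 0 then 1 else 0))
        = ((n - 1).factorial : ℝ) * ∏ j, (if j = A z then P (z j) else Q (z j)) := by
    intro z
    have hterm : ∀ σ : Equiv.Perm (Fin n),
        (∏ j, (if σ j = 0 then P else Q) (z j)) * (if A z = σ.symm 0 then 1 else 0)
          = if σ (A z) = 0 then ∏ j, (if j = A z then P (z j) else Q (z j)) else 0 := by
      intro σ
      by_cases h : σ (A z) = 0
      · have hsym : A z = σ.symm 0 := by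
          rw [Equiv.eq_symm_apply]; exact h
        rw [if_pos hsym, if_pos h, mul_one]
        refine Finset.prod_congr rfl (fun j _ => ?_)
        by_cases hj : j = A z
        · rw [if_pos hj, hj, h, if_pos rfl]
        · have hj' : σ j ≠ 0 := fun hc => hj (σ.injective (hc.trans h.symm))
          rw [if_neg hj', if_neg hj]
      · have hsym : ¬ (A z = σ.symm 0) := by
          rw [Equiv.eq_symm_apply]; exact h
        rw [if_neg hsym, if_neg h, mul_zero]
    rw [Finset.sum_congr rfl (fun σ _ => hterm σ), Finset.sum_ite, Finset.sum_const,
      Finset.sum_const_zero, add_zero, perm_fiber_card (A z) 0, nsmul_eq_mul]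
  rw [Finset.sum_congr rfl (fun z _ => h2 z), ← Finset.mul_sum, ← mul_assoc]
  congr 1
  have hn : 0 < n := Nat.pos_of_ne_zero (NeZero.ne n)
  have hfac : (n.factorial : ℝ) = (n : ℝ) * ((n - 1).factorial : ℝ) := by
    rw [← Nat.mul_factorial_pred hn.ne']; push_cast; ring
  rw [hfac]
  have h0 : ((n - 1).factorial : ℝ) ≠ 0 := Nat.cast_ne_zero.mpr (Nat.factorial_ne_zero _)
  have hn0 : (n : ℝ) ≠ 0 := Nat.cast_ne_zero.mpr (NeZero.ne n)
  field_simp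

theorem stmt5 (p : ℝ) (hp : p ∈ Set.Ico (0:ℝ) 1)
    (P Q : Fin 2 → ℝ)
    (hP : P = fun y => if y = 0 then 0 else 1)
    (hQ : Q = fun y => if y = 0 then p else 1 - p)
    (n : ℕ) [NeZero n] :
    betaN P Q n = (1 - p ^ n) / ((1 - p) * n) := by
  obtain ⟨hp0, hp1⟩ := hp
  have hq : (0:ℝ) < 1 - p := by linarith
  have hn : 0 < n := Nat.pos_of_ne_zero (NeZero.ne n)
  have hn0 : (n : ℝ) ≠ 0 := Nat.cast_ne_zero.mpr (NeZero.ne n)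
  -- weight of a vector under Q
  set W : (Fin n → Fin 2) → ℝ := fun z => ∏ j, Q (z j) with hW
  have hQnonneg : ∀ y : Fin 2, 0 ≤ Q y := by
    intro y; rw [hQ]; dsimp only; split <;> linarith
  have hWnonneg : ∀ z, 0 ≤ W z := fun z => Finset.prod_nonneg fun j _ => hQnonneg _
  have c0 : Fin n → Fin 2 := fun _ => 0
  -- bound for each individual product
  have key : ∀ (A : (Fin n → Fin 2) → Fin n) (z : Fin n → Fin 2),
      (∏ j, (if j = A z then P (z j) else Q (z j)))
        = if z (A z) = 0 then 0 else W z / (1 - p) := by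
    intro A z
    have hsplit : (∏ j, (if j = A z then P (z j) else Q (z j)))
        = P (z (A z)) * ∏ j ∈ Finset.univ.erase (A z), Q (z j) := by
      rw [← Finset.mul_prod_erase Finset.univ _ (Finset.mem_univ (A z))]
      rw [if_pos rfl]
      congr 1
      refine Finset.prod_congr rfl (fun j hj => ?_)
      rw [if_neg (Finset.ne_of_mem_erase hj)]
    have hWsplit : W z = Q (z (A z)) * ∏ j ∈ Finset.univ.erase (A z), Q (z j) :=
      (Finset.mul_prod_erase Finset.univ (fun j => Q (z j)) (Finset.mem_univ (A z))).symm
    by_cases h : z (A z) = 0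
    · rw [if_pos h, hsplit, h, hP]
      simp
    · rw [if_neg h, hsplit, hWsplit]
      have hP1 : P (z (A z)) = 1 := by rw [hP]; simp [h]
      have hQ1 : Q (z (A z)) = 1 - p := by rw [hQ]; simp [h]
      rw [hP1, hQ1, one_mul]
      field_simp
  -- total Q-mass is 1
  have hWsum : ∑ z : Fin n → Fin 2, W z = 1 := by
    simp only [hW]
    rw [← Fintype.prod_sum (fun (_ : Fin n) (y : Fin 2) => Q y)]
    have : ∑ y : Fin 2, Q y = 1 := by
      rw [hQ, Fin.sum_univ_two]; norm_num
    rw [Finset.prod_congr rfl (fun i _ => this), Finset.prod_const, one_pow]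
  have hWc0 : W (fun _ => 0) = p ^ n := by
    simp only [hW, hQ]
    simp [Finset.prod_const, Finset.card_univ]
  -- sum of masses over nonzero vectors
  have hWsum' : ∑ z : Fin n → Fin 2, (if z = (fun _ => 0) then 0 else W z)
      = 1 - p ^ n := by
    have : ∀ z : Fin n → Fin 2, (if z = (fun _ => 0) then (0:ℝ) else W z)
        = W z - (if z = (fun _ => 0) then W z else 0) := by
      intro z; split <;> simp
    rw [Finset.sum_congr rfl (fun z _ => this z), Finset.sum_sub_distrib, hWsum,
      Finset.sum_ite_eq' Finset.univ (fun _ => (0:Fin 2)) W, if_pos (Finset.mem_univ _), hWc0]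
  -- value of any adversary
  have hval : ∀ A : (Fin n → Fin 2) → Fin n,
      shuffleSuccess n (fun i => if i = 0 then P else Q) A
        = (n : ℝ)⁻¹ * ∑ z : Fin n → Fin 2,
            (if z (A z) = 0 then 0 else W z / (1 - p)) := by
    intro A
    rw [shuffleSuccess_eval n P Q A]
    congr 1
    exact Finset.sum_congr rfl (fun z _ => key A z)
  -- upper bound
  have hub : ∀ A : (Fin n → Fin 2) → Fin n,
      shuffleSuccess n (fun i => if i = 0 then P else Q) A
        ≤ (1 - p ^ n) / ((1 - p) * n) := by
    intro A
    rw [hval A]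
    have hnonneg2 : ∀ z : Fin n → Fin 2,
        (0:ℝ) ≤ (if z = (fun _ => 0) then 0 else W z) / (1 - p) := by
      intro z
      refine div_nonneg ?_ hq.le
      split
      · exact le_rfl
      · exact hWnonneg z
    have hle : ∑ z : Fin n → Fin 2, (if z (A z) = 0 then 0 else W z / (1 - p))
        ≤ ∑ z : Fin n → Fin 2, (if z = (fun _ => 0) then 0 else W z) / (1 - p) := by
      refine Finset.sum_le_sum (fun z _ => ?_)
      by_cases h : z (A z) = 0
      · rw [if_pos h]
        exact hnonneg2 z
      · rw [if_neg h]
        have hz : z ≠ (fun _ => 0) := by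
          intro hc; exact h (by rw [hc])
        rw [if_neg hz]
    have hcomb : ∀ x : ℝ, (n:ℝ)⁻¹ * (x / (1 - p)) = x / ((1 - p) * n) := by
      intro x
      rw [eq_div_iff (mul_ne_zero (ne_of_gt hq) hn0)]
      field_simp
    calc (n : ℝ)⁻¹ * ∑ z : Fin n → Fin 2, (if z (A z) = 0 then 0 else W z / (1 - p))
        ≤ (n : ℝ)⁻¹ * ∑ z : Fin n → Fin 2,
            (if z = (fun _ => 0) then 0 else W z) / (1 - p) := by
          apply mul_le_mul_of_nonneg_left hle
          positivity
      _ = (1 - p ^ n) / ((1 - p) * n) := by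
          rw [← Finset.sum_div, hWsum']
          exact hcomb _
  -- the optimal adversary
  let Astar : (Fin n → Fin 2) → Fin n :=
    fun z => if h : ∃ j, z j = 1 then h.choose else 0
  have hstar : shuffleSuccess n (fun i => if i = 0 then P else Q) Astar
      = (1 - p ^ n) / ((1 - p) * n) := by
    rw [hval Astar]
    have hAstar : ∀ z : Fin n → Fin 2,
        (if z (Astar z) = 0 then (0:ℝ) else W z / (1 - p))
          = (if z = (fun _ => 0) then 0 else W z) / (1 - p) := by
      intro z
      by_cases hz : z = (fun _ => 0)
      · have : z (Astar z) = 0 := by rw [hz]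
        rw [if_pos this, if_pos hz, zero_div]
      · have hex : ∃ j, z j = 1 := by
          have : ∃ j, z j ≠ 0 := by
            by_contra hc
            push_neg at hc
            exact hz (funext hc)
          obtain ⟨j, hj⟩ := this
          exact ⟨j, by omega⟩
        have hval1 : z (Astar z) = 1 := by
          simp only [Astar, dif_pos hex]
          exact hex.choose_spec
        have : z (Astar z) ≠ 0 := by rw [hval1]; omega
        rw [if_neg this, if_neg hz]
    rw [Finset.sum_congr rfl (fun z _ => hAstar z), ← Finset.sum_div, hWsum']
    rw [eq_div_iff (mul_ne_zero (ne_of_gt hq) hn0)]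
    field_simp
  -- conclude
  have hbdd : BddAbove (Set.range fun A : (Fin n → Fin 2) → Fin n =>
      shuffleSuccess n (fun i => if i = 0 then P else Q) A) := by
    refine ⟨(1 - p ^ n) / ((1 - p) * n), ?_⟩
    rintro _ ⟨A, rfl⟩
    exact hub A
  unfold betaN
  refine le_antisymm (ciSup_le hub) ?_
  rw [← hstar]
  exact le_ciSup hbdd Astar
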